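/- arXiv:1011.4609 — 2 statements merged into one kernel-verified Lean document; each statement's English description precedes it below -/
import Mathlib

section
/- If k ≥ (2+ε)·log_σ n for a positive constant ε, then with probability at least 1 − 1/n^ε, a uniformly random σ-ary string s of length n satisfies H_k(s) = 0. -/
open scoped Classical
open Finset Real Filter

noncomputable section

/-- Zeroth-order empirical entropy of a multiset of characters (base-2 bits per character). -/
def H0M {A : Type*} [Fintype A] (t : Multiset A) : ℝ :=
  (1 / (Multiset.card t : ℝ)) *
    ∑ a : A, (t.count a : ℝ) * Real.logb 2 ((Multiset.card t : ℝ) / (t.count a : ℝ))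

/-- Zeroth-order empirical entropy of a string `s` of length `n`. -/
def H0F {A : Type*} [Fintype A] {n : ℕ} (s : Fin n → A) : ℝ :=
  H0M (Multiset.map s Finset.univ.val)

/-- The context string `s_α`: the multiset of characters immediately following
occurrences of the `k`-tuple `α` in `s`. -/
def ctxF {A : Type*} [Fintype A] {n : ℕ} (k : ℕ) (s : Fin n → A) (α : Fin k → A) : Multiset A :=
  Multiset.map (fun i : Fin n => s ⟨min ((i : ℕ) + k) (n - 1), by have := i.isLt; omega⟩)
    ((Finset.univ.filter (fun i : Fin n =>
      (i : ℕ) + k < n ∧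
        ∀ t : Fin k, s ⟨min ((i : ℕ) + (t : ℕ)) (n - 1), by have := i.isLt; omega⟩ = α t)).val)

/-- `k`-th order empirical entropy of a string `s` of length `n`. -/
def HkF {A : Type*} [Fintype A] {n : ℕ} (k : ℕ) (s : Fin n → A) : ℝ :=
  (1 / (n : ℝ)) * ∑ α : Fin k → A, (Multiset.card (ctxF k s α) : ℝ) * H0M (ctxF k s α)

/-- The `k`-tuples of `s` starting at positions `i` and `j` both fit in `s` and coincide. -/
def MatchAt {A : Type*} {n : ℕ} (s : Fin n → A) (k i j : ℕ) : Prop :=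
  i + k ≤ n ∧ j + k ≤ n ∧
    ∀ t, t < k → ∀ (hi : i + t < n) (hj : j + t < n), s ⟨i + t, hi⟩ = s ⟨j + t, hj⟩

/-- `s` contains two matching `k`-tuples. -/
def HasMatch {A : Type*} {n : ℕ} (k : ℕ) (s : Fin n → A) : Prop :=
  ∃ i j : ℕ, i < j ∧ MatchAt s k i j

lemma H0M_card_le_one {A : Type*} [Fintype A] {t : Multiset A}
    (h : Multiset.card t ≤ 1) : H0M t = 0 := by
  unfold H0M
  rw [Finset.sum_eq_zero, mul_zero]
  intro a _
  have hc : t.count a ≤ Multiset.card t := Multiset.count_le_card a t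
  rcases Nat.le_one_iff_eq_zero_or_eq_one.mp (hc.trans h) with h1 | h1
  · simp [h1]
  · have : Multiset.card t = 1 := le_antisymm h (h1 ▸ hc)
    rw [this, h1]
    norm_num

lemma HkF_eq_zero_of_not_hasMatch {A : Type*} [Fintype A] {n k : ℕ} {s : Fin n → A}
    (h : ¬ HasMatch k s) : HkF k s = 0 := by
  unfold HkF
  rw [Finset.sum_eq_zero, mul_zero]
  intro α _
  rw [H0M_card_le_one, mul_zero]
  -- card (ctxF k s α) ≤ 1
  unfold ctxF
  rw [Multiset.card_map]
  by_contra hcard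
  push_neg at hcard
  obtain ⟨i, hi, j, hj, hij⟩ := Finset.one_lt_card.mp hcard
  simp only [Finset.mem_filter, Finset.mem_univ, true_and] at hi hj
  -- wlog i < j as naturals
  apply h
  have key : ∀ (i j : Fin n), (i : ℕ) + k < n → (j : ℕ) + k < n →
      (∀ t : Fin k, s ⟨min ((i : ℕ) + (t : ℕ)) (n - 1), by have := i.isLt; omega⟩ = α t) →
      (∀ t : Fin k, s ⟨min ((j : ℕ) + (t : ℕ)) (n - 1), by have := j.isLt; omega⟩ = α t) →
      (i : ℕ) < (j : ℕ) → HasMatch k s := by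
    intro i j h1 h2 e1 e2 hlt
    exact ⟨i, j, hlt, le_of_lt h1, le_of_lt h2, by
      intro t ht hti htj
      have mi : (⟨min ((i : ℕ) + t) (n - 1), by have := i.isLt; omega⟩ : Fin n)
          = ⟨(i : ℕ) + t, hti⟩ := Fin.ext (by simp; omega)
      have mj : (⟨min ((j : ℕ) + t) (n - 1), by have := j.isLt; omega⟩ : Fin n)
          = ⟨(j : ℕ) + t, htj⟩ := Fin.ext (by simp; omega)
      have := e1 ⟨t, ht⟩
      have := e2 ⟨t, ht⟩
      rw [mi] at *
      rw [mj] at *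
      simp_all⟩
  rcases lt_or_gt_of_ne (fun hv => hij (Fin.ext_iff.mpr hv) : (i:ℕ) ≠ (j:ℕ)) with hlt | hlt
  · exact key i j hi.1 hj.1 hi.2 hj.2 hlt
  · exact key j i hj.1 hi.1 hj.2 hi.2 hlt

lemma card_matchAt_le {A : Type*} [Fintype A] {σ n k : ℕ}
    (hσ : Fintype.card A = σ) (i j : ℕ) (hij : i < j) :
    (Finset.univ.filter (fun s : Fin n → A => MatchAt s k i j)).card ≤ σ ^ (n - k) := by
  by_cases hjk : j + k ≤ n
  case neg =>
    have : (Finset.univ.filter (fun s : Fin n → A => MatchAt s k i j)) = ∅ := by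
      apply Finset.filter_false_of_mem
      intro s _ hm
      exact hjk hm.2.1
    simp [this]
  case pos =>
  set emb : Fin (n - k) → Fin n := fun x =>
    ⟨if (x : ℕ) < j then (x : ℕ) else (x : ℕ) + k, by
      have := x.isLt; split <;> omega⟩ with hemb
  have key : ∀ s ∈ Finset.univ.filter (fun s : Fin n → A => MatchAt s k i j),
      ∀ s' ∈ Finset.univ.filter (fun s : Fin n → A => MatchAt s k i j),
      (fun x : Fin (n - k) => s (emb x)) = (fun x : Fin (n - k) => s' (emb x)) → s = s' := by
    intro s hs s' hs' heq
    simp only [Finset.mem_filter] at hs hs'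
    have hout : ∀ m : ℕ, ∀ hm : m < n, m < j ∨ j + k ≤ m → s ⟨m, hm⟩ = s' ⟨m, hm⟩ := by
      intro m hm hcase
      have hexists : ∃ x : Fin (n - k), emb x = ⟨m, hm⟩ := by
        rcases hcase with h | h
        · exact ⟨⟨m, by omega⟩, by rw [hemb]; exact Fin.ext (by simp [h])⟩
        · refine ⟨⟨m - k, by omega⟩, ?_⟩
          rw [hemb]
          have hnot : ¬ (m - k < j) := by omega
          exact Fin.ext (by simp [hnot]; omega)
      obtain ⟨x, hx⟩ := hexists
      have := congrFun heq x
      simpa [hx] using this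
    funext m
    obtain ⟨m, hm⟩ := m
    induction m using Nat.strong_induction_on with
    | _ m ih =>
      rcases lt_or_ge m j with h | h
      · exact hout m hm (Or.inl h)
      · rcases le_or_gt (j + k) m with h2 | h2
        · exact hout m hm (Or.inr h2)
        · have ht : m - j < k := by omega
          have hi1 : i + (m - j) < n := by omega
          have hj1 : j + (m - j) < n := by omega
          have e1 : s ⟨m, hm⟩ = s ⟨i + (m - j), hi1⟩ := by
            have h3 := hs.2.2.2 (m - j) ht hi1 hj1
            rw [h3]
            congr 1
            exact Fin.ext (by simp; omega)
          have e2 : s' ⟨m, hm⟩ = s' ⟨i + (m - j), hi1⟩ := by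
            have h3 := hs'.2.2.2 (m - j) ht hi1 hj1
            rw [h3]
            congr 1
            exact Fin.ext (by simp; omega)
          rw [e1, e2]
          exact ih (i + (m - j)) (by omega) hi1
  calc (Finset.univ.filter (fun s : Fin n → A => MatchAt s k i j)).card
      ≤ (Finset.univ : Finset (Fin (n - k) → A)).card :=
        Finset.card_le_card_of_injOn (fun s (x : Fin (n - k)) => s (emb x))
          (fun _ _ => Finset.mem_univ _) (fun s hs s' hs' h => key s hs s' hs' h)
    _ = σ ^ (n - k) := by rw [Finset.card_univ, Fintype.card_fun, hσ, Fintype.card_fin]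

lemma card_hasMatch_le {A : Type*} [Fintype A] {σ n k : ℕ}
    (hσ : Fintype.card A = σ) (hk1 : 1 ≤ k) :
    (Finset.univ.filter (fun s : Fin n → A => HasMatch k s)).card ≤ n ^ 2 * σ ^ (n - k) := by
  have hsub : (Finset.univ.filter (fun s : Fin n → A => HasMatch k s)) ⊆
      (Finset.univ : Finset (Fin n × Fin n)).biUnion
        (fun p => Finset.univ.filter
          (fun s : Fin n → A => ((p.1 : ℕ) < (p.2 : ℕ)) ∧ MatchAt s k p.1 p.2)) := by
    intro s hs
    simp only [Finset.mem_filter, Finset.mem_univ, true_and] at hs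
    obtain ⟨i, j, hij, hm⟩ := hs
    have hjn : j < n := by have := hm.2.1; omega
    have hin : i < n := lt_trans hij hjn
    apply Finset.mem_biUnion.mpr
    exact ⟨(⟨i, hin⟩, ⟨j, hjn⟩), Finset.mem_univ _, by
      simp only [Finset.mem_filter, Finset.mem_univ, true_and]
      exact ⟨hij, hm⟩⟩
  calc (Finset.univ.filter (fun s : Fin n → A => HasMatch k s)).card
      ≤ ∑ p : Fin n × Fin n, (Finset.univ.filter
          (fun s : Fin n → A => ((p.1 : ℕ) < (p.2 : ℕ)) ∧ MatchAt s k p.1 p.2)).card :=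
        le_trans (Finset.card_le_card hsub) (Finset.card_biUnion_le)
    _ ≤ ∑ _p : Fin n × Fin n, σ ^ (n - k) := by
        apply Finset.sum_le_sum
        intro p _
        by_cases hp : (p.1 : ℕ) < (p.2 : ℕ)
        · calc _ ≤ (Finset.univ.filter (fun s : Fin n → A => MatchAt s k p.1 p.2)).card :=
                Finset.card_le_card (by
                  intro s hs
                  simp only [Finset.mem_filter, Finset.mem_univ, true_and] at hs ⊢
                  exact hs.2)
            _ ≤ σ ^ (n - k) := card_matchAt_le hσ p.1 p.2 hp
        · have : (Finset.univ.filter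
              (fun s : Fin n → A => ((p.1 : ℕ) < (p.2 : ℕ)) ∧ MatchAt s k p.1 p.2)) = ∅ :=
            Finset.filter_false_of_mem (fun s _ h => hp h.1)
          rw [this]
          exact Nat.zero_le _
    _ = n ^ 2 * σ ^ (n - k) := by
        rw [Finset.sum_const, Finset.card_univ, Fintype.card_prod, Fintype.card_fin,
          smul_eq_mul, sq]

/-- If `k ≥ (2+ε)·log_σ n` with `ε > 0`, then with probability at least
`1 - 1/n^ε` a uniformly random σ-ary string `s` of length `n` has `H_k(s) = 0`. -/
theorem prob_Hk_zero_ge {A : Type*} [Fintype A] {σ n k : ℕ}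
    (hσ : Fintype.card A = σ) (hσ2 : 2 ≤ σ) {ε : ℝ} (hε : 0 < ε)
    (hk : (2 + ε) * Real.logb σ n ≤ (k : ℝ)) :
    1 - 1 / (n : ℝ) ^ ε
      ≤ ((Finset.univ.filter (fun s : Fin n → A => HkF k s = 0)).card : ℝ)
          / (Fintype.card (Fin n → A) : ℝ) := by
  have hσ1 : (1 : ℝ) < (σ : ℝ) := by exact_mod_cast lt_of_lt_of_le one_lt_two hσ2
  have hσpos : (0 : ℝ) < (σ : ℝ) := lt_trans one_pos hσ1
  have hcardfun : Fintype.card (Fin n → A) = σ ^ n := by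
    rw [Fintype.card_fun, hσ, Fintype.card_fin]
  have hNpos : (0 : ℝ) < (Fintype.card (Fin n → A) : ℝ) := by
    rw [hcardfun]
    positivity
  -- helper: if no string has a match, the probability is 1 and we are done
  have hdone : (∀ s : Fin n → A, ¬ HasMatch k s) →
      1 - 1 / (n : ℝ) ^ ε
        ≤ ((Finset.univ.filter (fun s : Fin n → A => HkF k s = 0)).card : ℝ)
            / (Fintype.card (Fin n → A) : ℝ) := by
    intro hnm
    have : (Finset.univ.filter (fun s : Fin n → A => HkF k s = 0)) = Finset.univ :=
      Finset.filter_true_of_mem (fun s _ => HkF_eq_zero_of_not_hasMatch (hnm s))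
    rw [this, Finset.card_univ, div_self hNpos.ne']
    have : 0 ≤ 1 / (n : ℝ) ^ ε := by positivity
    linarith
  by_cases hn1 : n ≤ 1
  · interval_cases n
    · -- n = 0 : no match
      apply hdone
      rintro s ⟨i, j, hij, _, hjk, _⟩
      omega
    · -- n = 1 : LHS = 0
      have h1 : ((1 : ℕ) : ℝ) ^ ε = 1 := by norm_num [Real.one_rpow]
      rw [h1]
      norm_num
      positivity
  push_neg at hn1
  have hnpos : (0 : ℝ) < (n : ℝ) := by exact_mod_cast Nat.lt_of_lt_of_le Nat.zero_lt_one hn1.le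
  by_cases hkn : n < k
  · apply hdone
    rintro s ⟨i, j, hij, hik, _, _⟩
    omega
  push_neg at hkn
  -- main case : 2 ≤ n, 1 ≤ k ≤ n
  have hn1' : (1 : ℝ) < (n : ℝ) := by exact_mod_cast hn1
  have hlogpos : 0 < Real.logb σ n := Real.logb_pos hσ1 hn1'
  have hk1 : 1 ≤ k := by
    by_contra hc
    push_neg at hc
    interval_cases k
    · simp at hk
      nlinarith
  -- the key power inequality : n^(2+ε) ≤ σ^k
  have hpow : (n : ℝ) ^ 2 * (n : ℝ) ^ ε ≤ (σ : ℝ) ^ k := by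
    have e1 : (n : ℝ) ^ 2 * (n : ℝ) ^ ε = (n : ℝ) ^ ((2 : ℝ) + ε) := by
      rw [Real.rpow_add hnpos, Real.rpow_two]
    have e2 : (n : ℝ) ^ ((2 : ℝ) + ε) = (σ : ℝ) ^ ((2 + ε) * Real.logb σ n) := by
      rw [mul_comm, Real.rpow_mul hσpos.le, Real.rpow_logb hσpos hσ1.ne' hnpos]
    have e3 : (σ : ℝ) ^ ((2 + ε) * Real.logb σ n) ≤ (σ : ℝ) ^ ((k : ℕ) : ℝ) :=
      Real.rpow_le_rpow_of_exponent_le hσ1.le hk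
    rw [e1, e2, Real.rpow_natCast] at *
    exact e3
  -- the counting inequality, in ℝ
  set c := (Finset.univ.filter (fun s : Fin n → A => HkF k s = 0)).card with hc
  have hcount : (σ : ℝ) ^ n ≤ (c : ℝ) + (n : ℝ) ^ 2 * (σ : ℝ) ^ (n - k) := by
    have hsplit : c + (Finset.univ.filter (fun s : Fin n → A => ¬ HkF k s = 0)).card
        = σ ^ n := by
      rw [hc, Finset.card_filter_add_card_filter_not, Finset.card_univ, hcardfun]
    have hsub : (Finset.univ.filter (fun s : Fin n → A => ¬ HkF k s = 0))
        ⊆ (Finset.univ.filter (fun s : Fin n → A => HasMatch k s)) := by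
      intro s hs
      simp only [Finset.mem_filter, Finset.mem_univ, true_and] at hs ⊢
      by_contra hnm
      exact hs (HkF_eq_zero_of_not_hasMatch hnm)
    have : σ ^ n ≤ c + n ^ 2 * σ ^ (n - k) := by
      calc σ ^ n = c + (Finset.univ.filter (fun s : Fin n → A => ¬ HkF k s = 0)).card :=
            hsplit.symm
        _ ≤ c + (Finset.univ.filter (fun s : Fin n → A => HasMatch k s)).card :=
            Nat.add_le_add_left (Finset.card_le_card hsub) c
        _ ≤ c + n ^ 2 * σ ^ (n - k) := Nat.add_le_add_left (card_hasMatch_le hσ hk1) c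
    exact_mod_cast this
  -- put it together
  rw [hcardfun]
  push_cast
  have hSk : (0 : ℝ) < (σ : ℝ) ^ k := by positivity
  have hSn : (0 : ℝ) < (σ : ℝ) ^ n := by positivity
  have hsplitpow : (σ : ℝ) ^ n = (σ : ℝ) ^ (n - k) * (σ : ℝ) ^ k := by
    rw [← pow_add, Nat.sub_add_cancel hkn]
  have h2 : ((σ : ℝ) ^ n - (n : ℝ) ^ 2 * (σ : ℝ) ^ (n - k)) / (σ : ℝ) ^ n
      = 1 - (n : ℝ) ^ 2 / (σ : ℝ) ^ k := by
    rw [sub_div, div_self hSn.ne']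
    congr 1
    rw [hsplitpow]
    have hSnk : ((σ : ℝ) ^ (n - k)) ≠ 0 := by positivity
    field_simp
  have h1 : ((σ : ℝ) ^ n - (n : ℝ) ^ 2 * (σ : ℝ) ^ (n - k)) / (σ : ℝ) ^ n
      ≤ (c : ℝ) / (σ : ℝ) ^ n := by
    gcongr
    linarith
  have hne : (0 : ℝ) < (n : ℝ) ^ ε := Real.rpow_pos_of_pos hnpos ε
  have h3 : (n : ℝ) ^ 2 / (σ : ℝ) ^ k ≤ 1 / (n : ℝ) ^ ε := by
    rw [div_le_div_iff₀ hSk hne]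
    nlinarith [hpow]
  calc 1 - 1 / (n : ℝ) ^ ε ≤ 1 - (n : ℝ) ^ 2 / (σ : ℝ) ^ k := by linarith
    _ = ((σ : ℝ) ^ n - (n : ℝ) ^ 2 * (σ : ℝ) ^ (n - k)) / (σ : ℝ) ^ n := h2.symm
    _ ≤ (c : ℝ) / (σ : ℝ) ^ n := h1

end
end

section
/- Any algorithm distinguishing a deterministic k-th order Markov source from an unbiased memoryless source on alphabet size σ with success probability at least 2/3 on both must read Ω(σ^{k/2}) characters; concretely, if it reads m characters with m ≤ σ^{k/2}/10, it cannot be correct with probability at least 2/3 on every source of both types. -/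
open scoped Classical
open Finset Real Filter

noncomputable section

/-- `s` is generated by a deterministic `k`-th order Markov source: a function
`f : A^k → A` with `s(i+k) = f(s(i),…,s(i+k-1))` for all valid `i`. -/
def GenByMarkov {A : Type*} {n : ℕ} (k : ℕ) (s : Fin n → A) : Prop :=
  ∃ f : (Fin k → A) → A, ∀ i : ℕ, ∀ (hik : i + k < n),
    f (fun t => s ⟨i + (t : ℕ), by have := t.isLt; omega⟩) = s ⟨i + k, hik⟩

/-- A string without a repeated `k`-tuple is generated by a deterministic Markov source. -/
lemma nomatch_markov {A : Type*} [Nonempty A] {m k : ℕ} (s : Fin m → A)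
    (h : ¬ HasMatch k s) : GenByMarkov k s := by
  classical
  refine ⟨fun α => if h' : ∃ i : ℕ, ∃ hik : i + k < m,
      (fun t : Fin k => s ⟨i + (t : ℕ), by have := t.isLt; omega⟩) = α
    then s ⟨h'.choose + k, h'.choose_spec.choose⟩ else Classical.arbitrary A, ?_⟩
  intro i hik
  have hex : ∃ i' : ℕ, ∃ h : i' + k < m,
      (fun t : Fin k => s ⟨i' + (t : ℕ), by have := t.isLt; omega⟩)
        = (fun t : Fin k => s ⟨i + (t : ℕ), by have := t.isLt; omega⟩) := ⟨i, hik, rfl⟩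
  simp only [dif_pos hex]
  have hik' := hex.choose_spec.choose
  have hα := hex.choose_spec.choose_spec
  set i' := hex.choose with hi'
  have heq : ∀ t, t < k → ∀ (h1 : i' + t < m) (h2 : i + t < m),
      s ⟨i' + t, h1⟩ = s ⟨i + t, h2⟩ := by
    intro t ht h1 h2
    have := congrFun hα ⟨t, ht⟩
    simpa using this
  by_cases hii : i' = i
  · exact congrArg s (Fin.ext (by simp [← hi', hii]))
  · exfalso
    apply h
    rcases Nat.lt_or_ge i' i with hlt | hge
    · exact ⟨i', i, hlt, by omega, by omega, fun t ht h1 h2 => heq t ht h1 h2⟩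
    · have hlt : i < i' := lt_of_le_of_ne hge (Ne.symm hii)
      exact ⟨i, i', hlt, by omega, by omega, fun t ht h1 h2 => (heq t ht h2 h1).symm⟩

/-- For a fixed pair of positions, at most a `σ^{-k}` fraction of strings match there. -/
lemma pair_count {A : Type*} [Fintype A] {m k : ℕ} (i j : ℕ) :
    (Finset.univ.filter (fun s : Fin m → A => i < j ∧ MatchAt s k i j)).card
      * (Fintype.card A) ^ k ≤ (Fintype.card A) ^ m := by
  classical
  set F := Finset.univ.filter (fun s : Fin m → A => i < j ∧ MatchAt s k i j) with hF
  rcases Finset.eq_empty_or_nonempty F with he | ⟨s₀, hs₀⟩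
  · simp [he]
  · have hmem := (Finset.mem_filter.mp hs₀).2
    have hij : i < j := hmem.1
    have hjk : j + k ≤ m := hmem.2.2.1
    have hkm : k ≤ m := by omega
    have hinj : Set.InjOn
        (fun s : Fin m → A => (fun p : {p : Fin m // (p : ℕ) < j ∨ j + k ≤ (p : ℕ)} => s p))
        F := by
      intro s hs s' hs' hres
      have hmS := ((Finset.mem_filter.mp hs).2).2.2.2
      have hmS' := ((Finset.mem_filter.mp hs').2).2.2.2
      have key : ∀ n, ∀ (hn : n < m), s ⟨n, hn⟩ = s' ⟨n, hn⟩ := by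
        intro n
        induction n using Nat.strong_induction_on with
        | _ n ih =>
          intro hn
          by_cases hcase : (n < j ∨ j + k ≤ n)
          · exact congrFun hres ⟨⟨n, hn⟩, hcase⟩
          · push_neg at hcase
            obtain ⟨hj1, hj2⟩ := hcase
            have ht : n - j < k := by omega
            have e1 : s ⟨n, hn⟩ = s ⟨i + (n - j), by omega⟩ := by
              have := hmS (n - j) ht (by omega) (by omega)
              rw [this]
              exact congrArg s (Fin.ext (by simp; omega))
            have e3 : s' ⟨n, hn⟩ = s' ⟨i + (n - j), by omega⟩ := by
              have := hmS' (n - j) ht (by omega) (by omega)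
              rw [this]
              exact congrArg s' (Fin.ext (by simp; omega))
            have e2 : s ⟨i + (n - j), by omega⟩ = s' ⟨i + (n - j), by omega⟩ :=
              ih (i + (n - j)) (by omega) (by omega)
            rw [e1, e2, ← e3]
      exact funext fun p => key p.1 p.2
    have h1 : F.card ≤ Fintype.card ({p : Fin m // (p : ℕ) < j ∨ j + k ≤ (p : ℕ)} → A) := by
      have := Finset.card_le_card_of_injOn _ (fun a _ => Finset.mem_univ _) hinj
      simpa using this
    have h2 : Fintype.card {p : Fin m // (p : ℕ) < j ∨ j + k ≤ (p : ℕ)} = m - k := by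
      rw [Fintype.card_subtype]
      have himg : (Finset.univ.filter
            (fun p : Fin m => ¬((p : ℕ) < j ∨ j + k ≤ (p : ℕ)))).image Fin.val
          = Finset.Ico j (j + k) := by
        ext x
        simp only [Finset.mem_image, Finset.mem_filter, Finset.mem_univ, true_and,
          Finset.mem_Ico]
        constructor
        · rintro ⟨p, hp, rfl⟩; omega
        · intro hx; exact ⟨⟨x, by omega⟩, by simp only [Fin.val_mk]; omega, rfl⟩
      have hcompl : (Finset.univ.filter
          (fun p : Fin m => ¬((p : ℕ) < j ∨ j + k ≤ (p : ℕ)))).card = k := by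
        calc (Finset.univ.filter
              (fun p : Fin m => ¬((p : ℕ) < j ∨ j + k ≤ (p : ℕ)))).card
            = ((Finset.univ.filter
              (fun p : Fin m => ¬((p : ℕ) < j ∨ j + k ≤ (p : ℕ)))).image Fin.val).card :=
              (Finset.card_image_of_injective _ Fin.val_injective).symm
          _ = (Finset.Ico j (j + k)).card := by rw [himg]
          _ = k := by rw [Nat.card_Ico]; omega
      have htot := Finset.card_filter_add_card_filter_not
        (s := (Finset.univ : Finset (Fin m)))
        (p := fun p : Fin m => (p : ℕ) < j ∨ j + k ≤ (p : ℕ))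
      simp only [Finset.card_univ, Fintype.card_fin] at htot
      omega
    have h3 : Fintype.card ({p : Fin m // (p : ℕ) < j ∨ j + k ≤ (p : ℕ)} → A)
        = Fintype.card A ^ (m - k) := by
      rw [Fintype.card_fun, h2]
    calc F.card * Fintype.card A ^ k
        ≤ Fintype.card A ^ (m - k) * Fintype.card A ^ k :=
          Nat.mul_le_mul_right _ (h1.trans_eq h3)
      _ = Fintype.card A ^ m := by rw [← pow_add]; congr 1; omega

/-- At most an `(m+1)² σ^{-k}` fraction of strings of length `m` contain a repeated
`k`-tuple. -/
lemma hasmatch_count {A : Type*} [Fintype A] {m k : ℕ} :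
    (Finset.univ.filter (fun s : Fin m → A => HasMatch k s)).card * (Fintype.card A) ^ k
      ≤ (m + 1) ^ 2 * (Fintype.card A) ^ m := by
  classical
  set P := Finset.range (m + 1) ×ˢ Finset.range (m + 1) with hP
  have hsub : Finset.univ.filter (fun s : Fin m → A => HasMatch k s) ⊆
      P.biUnion (fun ij =>
        Finset.univ.filter (fun s : Fin m → A => ij.1 < ij.2 ∧ MatchAt s k ij.1 ij.2)) := by
    intro s hs
    obtain ⟨i, j, hij, hmat⟩ := (Finset.mem_filter.mp hs).2
    have hjm : j ≤ m := by have := hmat.2.1; omega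
    refine Finset.mem_biUnion.mpr ⟨(i, j), ?_, ?_⟩
    · rw [hP, Finset.mem_product]
      constructor <;> (rw [Finset.mem_range]; omega)
    · exact Finset.mem_filter.mpr ⟨Finset.mem_univ _, hij, hmat⟩
  have h1 := (Finset.card_le_card hsub).trans Finset.card_biUnion_le
  calc (Finset.univ.filter (fun s : Fin m → A => HasMatch k s)).card * (Fintype.card A) ^ k
      ≤ (∑ ij ∈ P, (Finset.univ.filter
          (fun s : Fin m → A => ij.1 < ij.2 ∧ MatchAt s k ij.1 ij.2)).card)
        * (Fintype.card A) ^ k := Nat.mul_le_mul_right _ h1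
    _ = ∑ ij ∈ P, (Finset.univ.filter
          (fun s : Fin m → A => ij.1 < ij.2 ∧ MatchAt s k ij.1 ij.2)).card
        * (Fintype.card A) ^ k := by rw [Finset.sum_mul]
    _ ≤ ∑ _ij ∈ P, (Fintype.card A) ^ m := Finset.sum_le_sum fun ij _ => pair_count ij.1 ij.2
    _ = (m + 1) ^ 2 * (Fintype.card A) ^ m := by
        rw [Finset.sum_const, hP, Finset.card_product, Finset.card_range, smul_eq_mul]
        ring

/-- Any algorithm distinguishing deterministic `k`-th order Markov sources
from an unbiased memoryless source with success probability at least `2/3` on both must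
read `Ω(σ^{k/2})` characters: if it reads `m ≤ σ^{k/2}/10` characters, it cannot both
answer "memoryless" with probability at least `2/3` on uniform input and answer "Markov"
with probability at least `2/3` (i.e. "memoryless" with probability at most `1/3`) on
every string generated by a deterministic `k`-th order Markov source. -/
theorem no_fast_distinguisher {A : Type*} [Fintype A] {σ m k : ℕ}
    (hσ : Fintype.card A = σ) (hσ2 : 2 ≤ σ)
    (hm : (m : ℝ) ≤ (σ : ℝ) ^ ((k : ℝ) / 2) / 10)
    (alg : (Fin m → A) → ℝ) (h01 : ∀ x, 0 ≤ alg x ∧ alg x ≤ 1) :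
    ¬ ((2 / 3 ≤ (1 / (Fintype.card (Fin m → A) : ℝ)) * ∑ x : Fin m → A, alg x)
        ∧ ∀ s : Fin m → A, GenByMarkov k s → alg s ≤ 1 / 3) := by
  classical
  rintro ⟨h1, h2⟩
  have hA : Nonempty A := by
    rw [← Fintype.card_pos_iff]; omega
  have hcard : Fintype.card (Fin m → A) = σ ^ m := by
    rw [Fintype.card_fun, Fintype.card_fin, hσ]
  by_cases hm0 : m = 0
  · subst hm0
    have hmark : GenByMarkov k (fun i : Fin 0 => i.elim0) :=
      ⟨fun _ => Classical.arbitrary A, fun i hik => absurd hik (by omega)⟩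
    have h3 := h2 _ hmark
    have huniv : (Finset.univ : Finset (Fin 0 → A)) = {fun i => i.elim0} :=
      Finset.eq_singleton_iff_unique_mem.mpr
        ⟨Finset.mem_univ _, fun x _ => funext fun i => i.elim0⟩
    rw [hcard] at h1
    rw [show (∑ x : Fin 0 → A, alg x) = alg (fun i => i.elim0) by
      rw [huniv, Finset.sum_singleton]] at h1
    norm_num at h1
    linarith
  · have hm1 : 1 ≤ m := Nat.one_le_iff_ne_zero.mpr hm0
    set HM := Finset.univ.filter (fun s : Fin m → A => HasMatch k s) with hHM
    have hσpos : (0 : ℝ) < (σ : ℝ) := by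
      have : (2 : ℝ) ≤ (σ : ℝ) := by exact_mod_cast hσ2
      linarith
    have hN : (0 : ℝ) < (σ : ℝ) ^ m := pow_pos hσpos m
    have hb1 : ∑ x ∈ HM, alg x ≤ (HM.card : ℝ) := by
      calc ∑ x ∈ HM, alg x ≤ ∑ _x ∈ HM, (1 : ℝ) := Finset.sum_le_sum fun x _ => (h01 x).2
        _ = (HM.card : ℝ) := by simp
    have hb2 : ∑ x ∈ Finset.univ.filter (fun s : Fin m → A => ¬ HasMatch k s), alg x
        ≤ (σ : ℝ) ^ m * (1 / 3) := by
      calc ∑ x ∈ Finset.univ.filter (fun s : Fin m → A => ¬ HasMatch k s), alg x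
          ≤ ∑ _x ∈ Finset.univ.filter (fun s : Fin m → A => ¬ HasMatch k s), (1 / 3 : ℝ) :=
            Finset.sum_le_sum fun x hx =>
              h2 x (nomatch_markov x (Finset.mem_filter.mp hx).2)
        _ = ((Finset.univ.filter (fun s : Fin m → A => ¬ HasMatch k s)).card : ℝ) * (1 / 3) := by
            rw [Finset.sum_const, nsmul_eq_mul]
        _ ≤ (σ : ℝ) ^ m * (1 / 3) := by
            have hle : (Finset.univ.filter (fun s : Fin m → A => ¬ HasMatch k s)).card
                ≤ σ ^ m := by
              rw [← hcard]
              exact (Finset.card_filter_le _ _).trans (le_of_eq (Finset.card_univ))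
            have : ((Finset.univ.filter (fun s : Fin m → A => ¬ HasMatch k s)).card : ℝ)
                ≤ (σ : ℝ) ^ m := by exact_mod_cast hle
            linarith
    have hsplit : ∑ x : Fin m → A, alg x
        = ∑ x ∈ HM, alg x
          + ∑ x ∈ Finset.univ.filter (fun s : Fin m → A => ¬ HasMatch k s), alg x :=
      (Finset.sum_filter_add_sum_filter_not _ _ _).symm
    rw [hcard] at h1
    push_cast at h1
    have hsum_ge : 2 / 3 * (σ : ℝ) ^ m ≤ ∑ x : Fin m → A, alg x := by
      have h1' := mul_le_mul_of_nonneg_right h1 hN.le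
      calc 2 / 3 * (σ : ℝ) ^ m ≤ (1 / (σ : ℝ) ^ m * ∑ x : Fin m → A, alg x) * (σ : ℝ) ^ m :=
            h1'
        _ = ∑ x : Fin m → A, alg x := by field_simp
    have hHMcard : (σ : ℝ) ^ m / 3 ≤ (HM.card : ℝ) := by
      rw [hsplit] at hsum_ge
      linarith
    have hcount := hasmatch_count (A := A) (m := m) (k := k)
    rw [hσ] at hcount
    have hcountR : (HM.card : ℝ) * (σ : ℝ) ^ k ≤ ((m : ℝ) + 1) ^ 2 * (σ : ℝ) ^ m := by
      exact_mod_cast hcount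
    have hrp : ((σ : ℝ) ^ ((k : ℝ) / 2)) ^ 2 = (σ : ℝ) ^ k := by
      rw [← Real.rpow_natCast ((σ : ℝ) ^ ((k : ℝ) / 2)) 2, ← Real.rpow_mul hσpos.le]
      have : (k : ℝ) / 2 * ((2 : ℕ) : ℝ) = ((k : ℕ) : ℝ) := by push_cast; ring
      rw [this, Real.rpow_natCast]
    have hmm2 : ((m : ℝ) + 1) ^ 2 ≤ (σ : ℝ) ^ k / 25 := by
      have hm1' : (1 : ℝ) ≤ (m : ℝ) := by exact_mod_cast hm1
      nlinarith [hm, hrp, hm1', Real.rpow_nonneg hσpos.le ((k : ℝ) / 2)]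
    have e1 : (σ : ℝ) ^ m / 3 * (σ : ℝ) ^ k ≤ (HM.card : ℝ) * (σ : ℝ) ^ k :=
      mul_le_mul_of_nonneg_right hHMcard (pow_nonneg hσpos.le k)
    have e2 : ((m : ℝ) + 1) ^ 2 * (σ : ℝ) ^ m ≤ ((σ : ℝ) ^ k / 25) * (σ : ℝ) ^ m :=
      mul_le_mul_of_nonneg_right hmm2 hN.le
    have e3 : (0 : ℝ) < (σ : ℝ) ^ m * (σ : ℝ) ^ k := mul_pos hN (pow_pos hσpos k)
    nlinarith [e1, e2, e3, hcountR]

end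
end
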